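/- Let f be a neighbor function that is unbounded above, and let g : [f(0), ∞) → [0,∞) be the inverse of f (so g(f(x)) = x for all x ≥ 0 and f(g(a)) = a for all a ≥ f(0)). Then for every δ ≥ 0 and all 0 ≤ x ≤ u, one has x − g(max(f(0), f(x) − δ)) ≤ u − g(max(f(0), f(u) − δ)). (Consequently, the maximum of |x − y| over pairs x, y ∈ [0, u] with |f(x) − f(y)| ≤ δ equals u − g(max(f(0), f(u) − δ)), which is the per-group sensitivity used by the probably-no-clipping mechanism.) -/

import Mathlib

/-- A neighbor function: strictly increasing, continuous and concave on `[0, ∞)`,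
and such that `x ↦ f (exp x)` is convex on `ℝ`. -/
def IsNeighborFun (f : ℝ → ℝ) : Prop :=
  StrictMonoOn f (Set.Ici (0 : ℝ)) ∧ ContinuousOn f (Set.Ici (0 : ℝ)) ∧
    ConcaveOn ℝ (Set.Ici (0 : ℝ)) f ∧ ConvexOn ℝ Set.univ (fun x => f (Real.exp x))

/-- Concave increment lemma: increments over same-length intervals decrease to the right. -/
lemma conc_inc {f : ℝ → ℝ} (hc : ConcaveOn ℝ (Set.Ici (0:ℝ)) f) {a c t : ℝ}
    (ha : 0 ≤ a) (hac : a ≤ c) (ht : 0 ≤ t) :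
    f (c + t) - f c ≤ f (a + t) - f a := by
  rcases eq_or_lt_of_le (by linarith : a ≤ c + t) with h | h
  · have hc1 : c = a := by linarith
    have ht0 : t = 0 := by linarith
    simp [hc1, ht0]
  · have hspos : 0 < c + t - a := by linarith
    set l := (c - a) / (c + t - a) with hl
    have hl0 : 0 ≤ l := div_nonneg (by linarith) hspos.le
    have h1l : 1 - l = t / (c + t - a) := by rw [hl]; field_simp; ring
    have h1l0 : 0 ≤ 1 - l := by rw [h1l]; positivity
    have hct : (0:ℝ) ≤ c + t := by linarith
    have H1 := hc.2 (Set.mem_Ici.2 ha) (Set.mem_Ici.2 hct) hl0 h1l0 (by ring)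
    have H2 := hc.2 (Set.mem_Ici.2 ha) (Set.mem_Ici.2 hct) h1l0 hl0 (by ring)
    simp only [smul_eq_mul] at H1 H2
    have e1 : l * a + (1 - l) * (c + t) = a + t := by
      rw [hl]; field_simp; ring
    have e2 : (1 - l) * a + l * (c + t) = c := by
      rw [hl]; field_simp; ring
    rw [e1] at H1
    rw [e2] at H2
    nlinarith [H1, H2]

/-- Per-group sensitivity bound of the probably-no-clipping mechanism: the clipped distance
`x − f⁻¹(max(f(0), f(x) − δ))` is monotone in `x` on `[0, u]`. -/
theorem pnc_sensitivity_mono (f g : ℝ → ℝ) (hf : IsNeighborFun f)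
    (hub : ∀ M : ℝ, ∃ x : ℝ, 0 ≤ x ∧ M ≤ f x)
    (hg0 : ∀ a : ℝ, f 0 ≤ a → 0 ≤ g a)
    (hgf : ∀ x : ℝ, 0 ≤ x → g (f x) = x)
    (hfg : ∀ a : ℝ, f 0 ≤ a → f (g a) = a)
    (δ : ℝ) (hδ : 0 ≤ δ) (x u : ℝ) (hx : 0 ≤ x) (hxu : x ≤ u) :
    x - g (max (f 0) (f x - δ)) ≤ u - g (max (f 0) (f u - δ)) := by
  obtain ⟨hmono, _, hconc, _⟩ := hf
  have hu : (0:ℝ) ≤ u := le_trans hx hxu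
  have le_of_f_le : ∀ a b : ℝ, 0 ≤ a → 0 ≤ b → f a ≤ f b → a ≤ b := by
    intro a b ha hb hab
    by_contra hcon
    exact absurd (hmono (Set.mem_Ici.2 hb) (Set.mem_Ici.2 ha) (lt_of_not_ge hcon))
      (not_lt.2 hab)
  have hMx : f 0 ≤ max (f 0) (f x - δ) := le_max_left _ _
  have hMu : f 0 ≤ max (f 0) (f u - δ) := le_max_left _ _
  set y := g (max (f 0) (f x - δ)) with hy
  set v := g (max (f 0) (f u - δ)) with hv
  have hy0 : 0 ≤ y := hg0 _ hMx
  have hv0 : 0 ≤ v := hg0 _ hMu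
  have hfy : f y = max (f 0) (f x - δ) := hfg _ hMx
  have hfv : f v = max (f 0) (f u - δ) := hfg _ hMu
  -- y ≤ x
  have hfyx : f y ≤ f x := by
    rw [hfy]
    exact max_le (hmono.monotoneOn (Set.mem_Ici.2 le_rfl) (Set.mem_Ici.2 hx) hx)
      (by linarith)
  have hyx : y ≤ x := le_of_f_le _ _ hy0 hx hfyx
  -- key: f v ≤ f (u - x + y)
  have hw0 : (0:ℝ) ≤ u - x + y := by linarith
  have hinc : f (x + (u - x)) - f x ≤ f (y + (u - x)) - f y :=
    conc_inc hconc hy0 hyx (by linarith)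
  have hxy' : f y ≥ f x - δ := by rw [hfy]; exact le_max_right _ _
  have hkey : f v ≤ f (u - x + y) := by
    rw [hfv]
    apply max_le
    · exact hmono.monotoneOn (Set.mem_Ici.2 le_rfl) (Set.mem_Ici.2 hw0) hw0
    · have : y + (u - x) = u - x + y := by ring
      rw [this] at hinc
      have : x + (u - x) = u := by ring
      rw [this] at hinc
      linarith
  have := le_of_f_le _ _ hv0 hw0 hkey
  linarith
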